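/- Let t = (t_{ij}) be a 3×3 doubly stochastic matrix (nonnegative entries, all row and column sums equal to 1) arising as t_{ij} = |T_{ij}|² for a unitary matrix T. Then 4 t₁₁ t₂₂ t₁₂ t₂₁ ≥ (1 − t₁₁ − t₂₂ − t₁₂ − t₂₁ + t₁₁t₂₂ + t₁₂t₂₁)². -/

import Mathlib

open Complex

theorem stmt11 (T : Matrix (Fin 3) (Fin 3) ℂ) (hT : T ∈ Matrix.unitaryGroup (Fin 3) ℂ)
    (t : Matrix (Fin 3) (Fin 3) ℝ) (ht : ∀ i j, t i j = ‖T i j‖ ^ 2) :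
    4 * t 0 0 * t 1 1 * t 0 1 * t 1 0 ≥
      (1 - t 0 0 - t 1 1 - t 0 1 - t 1 0 + t 0 0 * t 1 1 + t 0 1 * t 1 0) ^ 2 := by
  have hT' : T * star T = 1 := Matrix.mem_unitaryGroup_iff.mp hT
  set a := T 0 0 with ha; set b := T 0 1 with hb; set c := T 0 2 with hc
  set d := T 1 0 with hd; set e := T 1 1 with he; set f := T 1 2 with hf
  have h1 : a * (starRingEnd ℂ) a + b * (starRingEnd ℂ) b + c * (starRingEnd ℂ) c = 1 := by
    have := congrFun (congrFun hT' 0) 0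
    simpa [Matrix.mul_apply, Fin.sum_univ_three, Matrix.one_apply,
      Matrix.conjTranspose_apply, ha, hb, hc] using this
  have h2 : d * (starRingEnd ℂ) d + e * (starRingEnd ℂ) e + f * (starRingEnd ℂ) f = 1 := by
    have := congrFun (congrFun hT' 1) 1
    simpa [Matrix.mul_apply, Fin.sum_univ_three, Matrix.one_apply,
      Matrix.conjTranspose_apply, hd, he, hf] using this
  have h3 : a * (starRingEnd ℂ) d + b * (starRingEnd ℂ) e + c * (starRingEnd ℂ) f = 0 := by
    have := congrFun (congrFun hT' 0) 1
    simpa [Matrix.mul_apply, Fin.sum_univ_three, Matrix.one_apply,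
      Matrix.conjTranspose_apply] using this
  -- row sums
  have r1 : normSq a + normSq b + normSq c = 1 := by
    have : ((normSq a + normSq b + normSq c : ℝ) : ℂ) = 1 := by
      push_cast
      rw [← mul_conj, ← mul_conj, ← mul_conj]; exact h1
    exact_mod_cast this
  have r2 : normSq d + normSq e + normSq f = 1 := by
    have : ((normSq d + normSq e + normSq f : ℝ) : ℂ) = 1 := by
      push_cast
      rw [← mul_conj, ← mul_conj, ← mul_conj]; exact h2
    exact_mod_cast this
  -- orthogonality consequence
  have hcf : c * (starRingEnd ℂ) f = -(a * (starRingEnd ℂ) d + b * (starRingEnd ℂ) e) := by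
    linear_combination h3
  have hns : normSq c * normSq f =
      normSq (a * (starRingEnd ℂ) d) + normSq (b * (starRingEnd ℂ) e) +
        2 * ((a * (starRingEnd ℂ) d) * (starRingEnd ℂ) (b * (starRingEnd ℂ) e)).re := by
    have := congrArg normSq hcf
    rw [map_mul, normSq_conj, normSq_neg, normSq_add] at this
    exact this
  set w : ℂ := (a * (starRingEnd ℂ) d) * (starRingEnd ℂ) (b * (starRingEnd ℂ) e) with hw
  have hnw : normSq w = (normSq a * normSq d) * (normSq b * normSq e) := by
    simp [hw, map_mul, normSq_conj]
  have hre : w.re ^ 2 ≤ normSq w := by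
    rw [normSq_apply]; nlinarith [sq_nonneg w.im]
  have t00 : t 0 0 = normSq a := by rw [ht, Complex.sq_norm]
  have t01 : t 0 1 = normSq b := by rw [ht, Complex.sq_norm]
  have t10 : t 1 0 = normSq d := by rw [ht, Complex.sq_norm]
  have t11 : t 1 1 = normSq e := by rw [ht, Complex.sq_norm]
  have hE : 1 - t 0 0 - t 1 1 - t 0 1 - t 1 0 + t 0 0 * t 1 1 + t 0 1 * t 1 0
      = 2 * w.re := by
    rw [map_mul, normSq_conj, map_mul, normSq_conj] at hns
    have hc' : normSq c = 1 - normSq a - normSq b := by linarith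
    have hf' : normSq f = 1 - normSq d - normSq e := by linarith
    rw [hc', hf'] at hns
    rw [t00, t01, t10, t11]
    linear_combination hns
  rw [hE, t00, t01, t10, t11]
  rw [hnw] at hre
  nlinarith [hre]
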